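/- Let x > 1 be irrational with regular continued fraction expansion [a₀, a₁, a₂, ...]. If a₁ ≥ a₀ - 1 ≥ 1, then |x - (a₀ - 1)| < x/(a₀ - 1), i.e., the integer approximation x ≃ a₀ - 1 is intelligent. -/

import Mathlib

/-- Partial quotients of the regular continued fraction of `x`:
`cfa x 0 = ⌊x⌋`, and `cfa x (n+1)` are the partial quotients of `1/(x - ⌊x⌋)`. -/
noncomputable def cfa (x : ℝ) : ℕ → ℤ
  | 0 => ⌊x⌋
  | n + 1 => cfa (x - ⌊x⌋)⁻¹ n

/-- The value of a finite regular continued fraction `[a₀, a₁, …, aₖ]`. -/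
noncomputable def cfVal : List ℝ → ℝ
  | [] => 0
  | a :: l => if l = [] then a else a + (cfVal l)⁻¹

/-- The `n`-th regular continued fraction convergent of `x`, i.e. the value of
`[a₀, a₁, …, aₙ]` where the `aᵢ` are the partial quotients of `x`. -/
noncomputable def cfConv (x : ℝ) (n : ℕ) : ℝ :=
  cfVal ((List.range (n + 1)).map fun i => ((cfa x i : ℤ) : ℝ))

theorem stmt_7 (x : ℝ) (hx : Irrational x) (hx1 : 1 < x)
    (h1 : cfa x 1 ≥ cfa x 0 - 1) (h2 : cfa x 0 - 1 ≥ 1) :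
    |x - ((cfa x 0 - 1 : ℤ) : ℝ)| < x / ((cfa x 0 : ℝ) - 1) := by
  have hcf0 : cfa x 0 = ⌊x⌋ := rfl
  have hcf1 : cfa x 1 = ⌊(x - ⌊x⌋)⁻¹⌋ := rfl
  rw [hcf0] at h1 h2 ⊢
  rw [hcf1] at h1
  set f : ℝ := x - ⌊x⌋ with hf
  have hirr : Irrational f := hx.sub_intCast _
  have hf0 : 0 < f := by
    have h := Int.floor_le x
    rcases eq_or_lt_of_le h with h' | h'
    · exact absurd h'.symm (hx.ne_int _)
    · rw [hf]; linarith
  have hinv : Irrational f⁻¹ := hirr.inv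
  have hlt : ((⌊f⁻¹⌋ : ℤ) : ℝ) < f⁻¹ :=
    lt_of_le_of_ne (Int.floor_le _) (fun h => hinv.ne_int _ h.symm)
  have h1' : ((⌊x⌋ : ℝ) - 1) ≤ ((⌊f⁻¹⌋ : ℤ) : ℝ) := by exact_mod_cast h1
  have h2' : (2 : ℝ) ≤ (⌊x⌋ : ℝ) := by exact_mod_cast by linarith [h2]
  have hkey : f * ((⌊x⌋ : ℝ) - 1) < 1 := by
    have : (⌊x⌋ : ℝ) - 1 < f⁻¹ := lt_of_le_of_lt h1' hlt
    calc f * ((⌊x⌋ : ℝ) - 1) < f * f⁻¹ := by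
          exact mul_lt_mul_of_pos_left this hf0
      _ = 1 := mul_inv_cancel₀ (ne_of_gt hf0)
  have hxeq : x = (⌊x⌋ : ℝ) + f := by simp [hf]
  have hpos : (0 : ℝ) < (⌊x⌋ : ℝ) - 1 := by linarith
  rw [lt_div_iff₀ hpos]
  have habs : x - ((⌊x⌋ - 1 : ℤ) : ℝ) = f + 1 := by push_cast; linarith [hxeq]
  rw [habs, abs_of_pos (by linarith)]
  nlinarith [hxeq, hkey, hf0]
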